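/- Let E₀, E be metric spaces, G : E₀ × L²([0,T]; H₀)_w → E a map (the weak topology on the second factor), continuous in the sense that x_n → x in E₀ and f_n ⇀ f in L²([0,T];H₀) imply G(x_n, f_n) → G(x, f) in E. Define I_x(v) = inf { (1/2)∫₀^T ‖f_s‖²_{H₀} ds : G(x, f) = v } (inf ∅ = ∞). Then for every v ∈ E, the map x ↦ I_x(v) is lower semicontinuous on E₀. -/

import Mathlib

open Filter MeasureTheory Topology
open scoped RealInnerProductSpace ENNReal

/-- Bounded sequences in a real Hilbert space have weakly convergent subsequences. -/
theorem weak_seq_compact {W : Type*} [NormedAddCommGroup W] [InnerProductSpace ℝ W]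
    [CompleteSpace W] (f : ℕ → W) (R : ℝ) (hR : ∀ n, ‖f n‖ ≤ R) :
    ∃ (g : W) (φ : ℕ → ℕ), StrictMono φ ∧
      ∀ y : W, Tendsto (fun k => ⟪f (φ k), y⟫) atTop (𝓝 ⟪g, y⟫) := by
  have hR0 : 0 ≤ R := le_trans (norm_nonneg _) (hR 0)
  -- Step A: diagonal extraction via compactness of a product of intervals
  set S : Set (ℕ → ℝ) := Set.pi Set.univ (fun _ => Set.Icc (-(R*R)) (R*R)) with hS
  have hcomp : IsCompact S := isCompact_univ_pi fun _ => isCompact_Icc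
  have hmem : ∀ n, (fun m => ⟪f n, f m⟫) ∈ S := by
    intro n
    intro m _
    have h1 : |⟪f n, f m⟫| ≤ ‖f n‖ * ‖f m‖ := abs_real_inner_le_norm _ _
    have h2 : ‖f n‖ * ‖f m‖ ≤ R * R :=
      mul_le_mul (hR n) (hR m) (norm_nonneg _) hR0
    have := h1.trans h2
    exact abs_le.mp this |>.imp id id |> fun h => ⟨h.1, h.2⟩
  obtain ⟨L, -, φ, hφ, hconv⟩ := hcomp.tendsto_subseq hmem
  have hpt : ∀ m, Tendsto (fun k => ⟪f (φ k), f m⟫) atTop (𝓝 (L m)) := by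
    intro m
    exact (tendsto_pi_nhds.mp hconv) m
  -- Step B: the set of vectors where the subsequence converges weakly
  set Sc : Set W := {y | ∃ a, Tendsto (fun k => ⟪f (φ k), y⟫) atTop (𝓝 a)} with hSc
  set K : Submodule ℝ W := (Submodule.span ℝ (Set.range f)).topologicalClosure with hK
  have hspan : ∀ y ∈ Submodule.span ℝ (Set.range f), y ∈ Sc := by
    intro y hy
    induction hy using Submodule.span_induction with
    | mem z hz =>
      obtain ⟨m, rfl⟩ := hz
      exact ⟨L m, hpt m⟩
    | zero => exact ⟨0, by simpa using tendsto_const_nhds⟩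
    | add a b _ _ ha hb =>
      obtain ⟨la, hla⟩ := ha; obtain ⟨lb, hlb⟩ := hb
      exact ⟨la + lb, by simpa [inner_add_right] using hla.add hlb⟩
    | smul c a _ ha =>
      obtain ⟨la, hla⟩ := ha
      exact ⟨c * la, by simpa [real_inner_smul_right] using hla.const_mul c⟩
  have hclosure : ∀ y ∈ K, y ∈ Sc := by
    intro y hy
    have hyc : y ∈ closure ((Submodule.span ℝ (Set.range f) : Submodule ℝ W) : Set W) := by
      rwa [← Submodule.topologicalClosure_coe]
    -- Cauchy via uniform bound
    have hcau : CauchySeq (fun k => ⟪f (φ k), y⟫) := by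
      rw [Metric.cauchySeq_iff]
      intro ε hε
      have hε3 : 0 < ε / 3 / (R + 1) := by positivity
      obtain ⟨z, hz, hzy⟩ := Metric.mem_closure_iff.mp hyc _ hε3
      obtain ⟨a, ha⟩ := hspan z hz
      have hcz : CauchySeq (fun k => ⟪f (φ k), z⟫) := ha.cauchySeq
      rw [Metric.cauchySeq_iff] at hcz
      obtain ⟨N, hN⟩ := hcz (ε/3) (by positivity)
      refine ⟨N, fun m hm n hn => ?_⟩
      have key : ∀ k, |⟪f (φ k), y⟫ - ⟪f (φ k), z⟫| ≤ ε / 3 := by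
        intro k
        have : ⟪f (φ k), y⟫ - ⟪f (φ k), z⟫ = ⟪f (φ k), y - z⟫ := by
          rw [inner_sub_right]
        rw [this]
        have h1 : |⟪f (φ k), y - z⟫| ≤ ‖f (φ k)‖ * ‖y - z‖ := abs_real_inner_le_norm _ _
        have h2 : ‖y - z‖ ≤ ε / 3 / (R + 1) := by
          rw [← dist_eq_norm]
          exact hzy.le
        have h3 : ‖f (φ k)‖ * ‖y - z‖ ≤ (R+1) * (ε / 3 / (R + 1)) := by
          apply mul_le_mul (by linarith [hR (φ k)]) h2 (norm_nonneg _) (by linarith)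
        have h4 : (R+1) * (ε / 3 / (R + 1)) = ε / 3 := by field_simp
        linarith [h1.trans h3]
      have hmn := hN m hm n hn
      rw [Real.dist_eq] at hmn ⊢
      have t1 := key m
      have t2 := key n
      have : ⟪f (φ m), y⟫ - ⟪f (φ n), y⟫ =
          (⟪f (φ m), y⟫ - ⟪f (φ m), z⟫) + (⟪f (φ m), z⟫ - ⟪f (φ n), z⟫)
          + (⟪f (φ n), z⟫ - ⟪f (φ n), y⟫) := by ring
      rw [this]
      calc |_| ≤ |⟪f (φ m), y⟫ - ⟪f (φ m), z⟫| + |⟪f (φ m), z⟫ - ⟪f (φ n), z⟫|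
          + |⟪f (φ n), z⟫ - ⟪f (φ n), y⟫| := abs_add_three _ _ _
        _ < ε := by rw [abs_sub_comm (⟪f (φ n), z⟫)] at *; linarith
    obtain ⟨a, ha⟩ := cauchySeq_tendsto_of_complete hcau
    exact ⟨a, ha⟩
  haveI : CompleteSpace K := (Submodule.isClosed_topologicalClosure _).completeSpace_coe
  have hall : ∀ y : W, y ∈ Sc := by
    intro y
    have h1 : ((K.orthogonalProjectionOnto y : W)) ∈ Sc :=
      hclosure _ (K.orthogonalProjectionOnto y).2
    have h2 : (y - K.orthogonalProjectionOnto y) ∈ Sc := by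
      refine ⟨0, ?_⟩
      have horth := Submodule.sub_starProjection_mem_orthogonal (K := K) y
      have : ∀ k, ⟪f (φ k), y - K.starProjection y⟫ = 0 := by
        intro k
        have hfk : f (φ k) ∈ K :=
          Submodule.le_topologicalClosure _ (Submodule.subset_span ⟨φ k, rfl⟩)
        exact (Submodule.mem_orthogonal _ _).mp horth _ hfk
      simpa [this] using tendsto_const_nhds (x := (0:ℝ)) (α := ℕ) (f := atTop)
    obtain ⟨a, ha⟩ := h1; obtain ⟨b, hb⟩ := h2
    refine ⟨a + b, ?_⟩
    have heq : ∀ k, ⟪f (φ k), y⟫ = ⟪f (φ k), (K.orthogonalProjectionOnto y : W)⟫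
        + ⟪f (φ k), y - K.orthogonalProjectionOnto y⟫ := by
      intro k
      have hy : (K.orthogonalProjectionOnto y : W) + (y - K.orthogonalProjectionOnto y) = y := by abel
      rw [← inner_add_right, hy]
    simp only [heq]
    exact ha.add hb
  -- Step C: build the limit functional and apply Riesz representation
  classical
  let Tfun : W → ℝ := fun y => (hall y).choose
  have hT : ∀ y, Tendsto (fun k => ⟪f (φ k), y⟫) atTop (𝓝 (Tfun y)) :=
    fun y => (hall y).choose_spec
  let Tlin : W →ₗ[ℝ] ℝ :=
    { toFun := Tfun
      map_add' := by
        intro a b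
        refine tendsto_nhds_unique (hT (a + b)) ?_
        simpa [inner_add_right] using (hT a).add (hT b)
      map_smul' := by
        intro c a
        refine tendsto_nhds_unique (hT (c • a)) ?_
        simpa [real_inner_smul_right] using (hT a).const_mul c }
  have hTbound : ∀ y, ‖Tlin y‖ ≤ R * ‖y‖ := by
    intro y
    have : Tendsto (fun k => |⟪f (φ k), y⟫|) atTop (𝓝 |Tfun y|) := (hT y).abs
    rw [Real.norm_eq_abs]
    refine le_of_tendsto this (Eventually.of_forall fun k => ?_)
    exact (abs_real_inner_le_norm _ _).trans
      (mul_le_mul_of_nonneg_right (hR (φ k)) (norm_nonneg _))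
  let T : W →L[ℝ] ℝ := Tlin.mkContinuous R hTbound
  refine ⟨(InnerProductSpace.toDual ℝ W).symm T, φ, hφ, fun y => ?_⟩
  have : ⟪(InnerProductSpace.toDual ℝ W).symm T, y⟫ = T y := by
    rw [← InnerProductSpace.toDual_apply_apply]
    simp
  rw [this]
  exact hT y

/-- The space `L²([0,T]; H₀)`. -/
noncomputable abbrev L2T (H₀ : Type*) [NormedAddCommGroup H₀] (T : ℝ) :=
  Lp H₀ 2 (volume.restrict (Set.Icc (0:ℝ) T))

/-- if `G : E₀ × L²([0,T];H₀)_w → E` is jointly sequentially continuous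
(strong convergence in `E₀`, weak convergence in `L²`), then for each `v ∈ E` the rate
function `I_x(v) = inf { ½‖f‖²_{L²} : G(x,f) = v }` (`inf ∅ = ∞`) is lower semicontinuous
in `x`. -/
theorem stmt14 {E₀ E : Type*} [MetricSpace E₀] [MetricSpace E]
    {H₀ : Type*} [NormedAddCommGroup H₀] [InnerProductSpace ℝ H₀] [CompleteSpace H₀]
    (T : ℝ) (hT : 0 < T)
    (G : E₀ → L2T H₀ T → E)
    (hG : ∀ (x : E₀) (xn : ℕ → E₀) (f : L2T H₀ T) (fn : ℕ → L2T H₀ T),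
      Tendsto xn atTop (nhds x) →
      (∀ g : L2T H₀ T, Tendsto (fun n => ⟪fn n, g⟫) atTop (nhds ⟪f, g⟫)) →
      Tendsto (fun n => G (xn n) (fn n)) atTop (nhds (G x f))) :
    ∀ v : E, LowerSemicontinuous (fun x : E₀ =>
      ⨅ (f : L2T H₀ T) (_ : G x f = v), ENNReal.ofReal (‖f‖ ^ 2 / 2)) := by
  intro v x c hc
  set F : E₀ → ℝ≥0∞ := fun x =>
    ⨅ (f : L2T H₀ T) (_ : G x f = v), ENNReal.ofReal (‖f‖ ^ 2 / 2) with hF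
  by_contra hcon
  have hfreq : ∃ᶠ y in nhds x, F y ≤ c := by
    simpa [not_lt] using (Filter.not_eventually.mp hcon)
  -- extract a sequence
  have hpick : ∀ n : ℕ, ∃ y, dist y x < 1/(n+1) ∧ F y ≤ c := by
    intro n
    have hb : Metric.ball x (1/(n+1)) ∈ nhds x :=
      Metric.ball_mem_nhds _ (by positivity)
    obtain ⟨y, hy1, hy2⟩ := (hfreq.and_eventually (eventually_mem_set.mpr hb)).exists
    exact ⟨y, hy2, hy1⟩
  choose xn hx1 hx2 using hpick
  have hxn : Tendsto xn atTop (nhds x) := by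
    rw [tendsto_iff_dist_tendsto_zero]
    apply squeeze_zero (fun n => dist_nonneg) (fun n => (hx1 n).le)
    exact tendsto_one_div_add_atTop_nhds_zero_nat
  have hcne : c ≠ ⊤ := (lt_of_lt_of_le hc le_top).ne
  -- near-optimal controls
  have hsel : ∀ n : ℕ, ∃ f, G (xn n) f = v ∧
      ENNReal.ofReal (‖f‖ ^ 2 / 2) < c + ENNReal.ofReal (1/(n+1)) := by
    intro n
    have hlt : F (xn n) < c + ENNReal.ofReal (1/(n+1)) :=
      lt_of_le_of_lt (hx2 n) (ENNReal.lt_add_right hcne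
        (by simp [ENNReal.ofReal_eq_zero]; positivity))
    obtain ⟨f, hf⟩ := iInf_lt_iff.mp hlt
    obtain ⟨hGf, hfv⟩ := iInf_lt_iff.mp hf
    exact ⟨f, hGf, hfv⟩
  choose fn hGn hfn using hsel
  -- real-valued bound on the norms
  have hreal : ∀ n : ℕ, ‖fn n‖ ^ 2 / 2 ≤ c.toReal + 1/(n+1) := by
    intro n
    have h1 : ENNReal.ofReal (‖fn n‖ ^ 2 / 2) ≤ ENNReal.ofReal (c.toReal + 1/(n+1)) := by
      rw [ENNReal.ofReal_add ENNReal.toReal_nonneg (by positivity), ENNReal.ofReal_toReal hcne]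
      exact (hfn n).le
    exact (ENNReal.ofReal_le_ofReal_iff (by positivity)).mp h1
  have hbdd : ∀ n : ℕ, ‖fn n‖ ≤ Real.sqrt (2 * (c.toReal + 1)) := by
    intro n
    have h2 : ‖fn n‖ ^ 2 ≤ 2 * (c.toReal + 1) := by
      have := hreal n
      have h3 : 1/((n:ℝ)+1) ≤ 1 := by
        rw [div_le_one (by positivity)]; linarith [Nat.cast_nonneg (α := ℝ) n]
      linarith
    have := Real.sqrt_le_sqrt h2
    rwa [Real.sqrt_sq (norm_nonneg _)] at this
  obtain ⟨g, φ, hφ, hweak⟩ := weak_seq_compact fn _ hbdd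
  -- identify the limit point
  have hGv : G x g = v := by
    have h1 := hG x (xn ∘ φ) g (fn ∘ φ) (hxn.comp hφ.tendsto_atTop) (fun g' => hweak g')
    have h2 : (fun k => G ((xn ∘ φ) k) ((fn ∘ φ) k)) = fun _ => v := by
      funext k; exact hGn (φ k)
    rw [h2] at h1
    exact tendsto_nhds_unique h1 tendsto_const_nhds
  -- weak lower semicontinuity of the norm
  have hkey : ‖g‖ ^ 2 / 2 ≤ c.toReal := by
    have hinner := hweak g
    have hbound : ∀ k, ⟪fn (φ k), g⟫ ≤ c.toReal + 1/(φ k + 1) + ‖g‖ ^ 2 / 2 := by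
      intro k
      have h1 : ⟪fn (φ k), g⟫ ≤ ‖fn (φ k)‖ * ‖g‖ := real_inner_le_norm _ _
      have h2 : ‖fn (φ k)‖ * ‖g‖ ≤ ‖fn (φ k)‖ ^ 2 / 2 + ‖g‖ ^ 2 / 2 := by
        nlinarith [sq_nonneg (‖fn (φ k)‖ - ‖g‖)]
      have h3 := hreal (φ k)
      linarith
    have hlimb : Tendsto (fun k => c.toReal + 1/((φ k : ℝ) + 1) + ‖g‖ ^ 2 / 2) atTop
        (nhds (c.toReal + 0 + ‖g‖ ^ 2 / 2)) := by
      refine Tendsto.add (Tendsto.add tendsto_const_nhds ?_) tendsto_const_nhds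
      exact tendsto_one_div_add_atTop_nhds_zero_nat.comp hφ.tendsto_atTop
    have hle : ⟪g, g⟫ ≤ c.toReal + 0 + ‖g‖ ^ 2 / 2 :=
      le_of_tendsto_of_tendsto' hinner hlimb hbound
    have h4 : ⟪g, g⟫ = ‖g‖ ^ 2 := real_inner_self_eq_norm_sq g
    rw [h4] at hle
    linarith
  have hFx : F x ≤ c := by
    refine le_trans (iInf₂_le g hGv) ?_
    calc ENNReal.ofReal (‖g‖ ^ 2 / 2) ≤ ENNReal.ofReal c.toReal :=
          ENNReal.ofReal_le_ofReal hkey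
      _ = c := ENNReal.ofReal_toReal hcne
  exact absurd hc (not_lt.mpr hFx)
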